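/- Let (G,c) be a W-state graph whose monochromatic subgraph splits into factor-critical components on X and X' with min(|X|,|X'|) ≥ 3. Then the cut δ(X, X') is a non-trivial tight cut of G; in particular G is not a brick. -/

import Mathlib

/-! Multigraphs (parallel edges allowed, no loops) with half-edge 2-colourings,
    matchings, W-state graphs and W-cones, following the paper. -/

structure Multigraph (V E : Type) where
  fst : E → V
  snd : E → V
  no_loop : ∀ e, fst e ≠ snd e

namespace Multigraph

variable {V E : Type} (G : Multigraph V E)

/-- Edge `e` is incident with vertex `v`. -/
def Inc (e : E) (v : V) : Prop := G.fst e = v ∨ G.snd e = v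

/-- Adjacency using only edges in the edge set `F`. -/
def AdjIn (F : Set E) (u v : V) : Prop :=
  u ≠ v ∧ ∃ e ∈ F, G.Inc e u ∧ G.Inc e v

def Adj (u v : V) : Prop := G.AdjIn Set.univ u v

/-- Reachability inside the vertex set `S`, using only edges in `F`. -/
def ReachOn (F : Set E) (S : Set V) (u v : V) : Prop :=
  Relation.ReflTransGen (fun a b => a ∈ S ∧ b ∈ S ∧ G.AdjIn F a b) u v

/-- The subgraph with edge set `F` induced on the vertex set `S` is connected. -/
def ConnectedOn (F : Set E) (S : Set V) : Prop :=
  ∀ u ∈ S, ∀ v ∈ S, G.ReachOn F S u v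

def Connected : Prop := G.ConnectedOn Set.univ Set.univ

/-- `K` is a connected component of the subgraph with edge set `F` induced on `S`. -/
def IsCompOn (F : Set E) (S : Set V) (K : Set V) : Prop :=
  ∃ v ∈ S, K = {u | u ∈ S ∧ G.ReachOn F S u v}

def IsMatching (M : Set E) : Prop :=
  ∀ e ∈ M, ∀ f ∈ M, e ≠ f → ∀ v : V, ¬ (G.Inc e v ∧ G.Inc f v)

/-- `M` is a perfect matching of the subgraph of `G` induced on `S`. -/
def IsPerfectMatchingOn (S : Set V) (M : Set E) : Prop :=
  (∀ e ∈ M, G.fst e ∈ S ∧ G.snd e ∈ S) ∧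
  ∀ v ∈ S, ∃! e, e ∈ M ∧ G.Inc e v

def IsPerfectMatching (M : Set E) : Prop :=
  G.IsPerfectMatchingOn Set.univ M

/-- Every edge lies in some perfect matching. -/
def MatchingCovered : Prop :=
  ∀ e : E, ∃ M : Set E, G.IsPerfectMatching M ∧ e ∈ M

/-- The subgraph with edge set `F` induced on `K` is factor-critical. -/
def FactorCriticalOn (F : Set E) (K : Set V) : Prop :=
  ∀ v ∈ K, ∃ M : Set E, M ⊆ F ∧ G.IsPerfectMatchingOn (K \ {v}) M

def FactorCritical : Prop := G.FactorCriticalOn Set.univ Set.univ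

/-- `M` is a maximum matching among matchings using only edges in `F`. -/
def IsMaxMatchingIn (F M : Set E) : Prop :=
  M ⊆ F ∧ G.IsMatching M ∧
  ∀ N : Set E, N ⊆ F → G.IsMatching N → N.ncard ≤ M.ncard

/-- Half-edge 2-colourings are functions `c : E → V → Bool`
    (`true` = red, `false` = blue; only the values at endpoints matter). -/
def Bichromatic (c : E → V → Bool) (e : E) : Prop :=
  c e (G.fst e) ≠ c e (G.snd e)

/-- The monochromatic edges. -/
def MonoEdges (c : E → V → Bool) : Set E := {e | ¬ G.Bichromatic c e}

/-- Every vertex has an incident red half-edge. -/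
def VertexCond (c : E → V → Bool) : Prop :=
  ∀ v : V, ∃ e : E, G.Inc e v ∧ c e v = true

/-- Every perfect matching contains exactly one bichromatic edge. -/
def MatchingCond (c : E → V → Bool) : Prop :=
  ∀ M : Set E, G.IsPerfectMatching M → ∃! e, e ∈ M ∧ G.Bichromatic c e

/-- All monochromatic edges are blue. -/
def NoRedMono (c : E → V → Bool) : Prop :=
  ∀ e : E, ¬ G.Bichromatic c e → c e (G.fst e) = false

/-- W-state graph. -/
def IsWState (c : E → V → Bool) : Prop :=
  G.MatchingCovered ∧ G.MatchingCond c ∧ G.VertexCond c ∧ G.NoRedMono c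

def Universal (v : V) : Prop := ∀ u : V, u ≠ v → G.Adj u v

/-- W-cone with apex `v`. -/
def IsWConeWithApex (c : E → V → Bool) (v : V) : Prop :=
  G.MatchingCovered ∧ G.Universal v ∧
  (∀ e : E, G.Bichromatic c e ↔ G.Inc e v) ∧
  G.VertexCond c ∧ G.NoRedMono c

def IsWCone (c : E → V → Bool) : Prop := ∃ v : V, G.IsWConeWithApex c v

/-- `e` and `f` are parallel edges (same pair of endpoints). -/
def Parallel (e f : E) : Prop :=
  (G.fst e = G.fst f ∧ G.snd e = G.snd f) ∨
  (G.fst e = G.snd f ∧ G.snd e = G.fst f)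

/-- The cut `δ(X)`. -/
def CutEdges (X : Set V) : Set E :=
  {e | (G.fst e ∈ X ∧ G.snd e ∉ X) ∨ (G.fst e ∉ X ∧ G.snd e ∈ X)}

/-- `δ(X)` is a tight cut. -/
def IsTightCut (X : Set V) : Prop :=
  ∀ M : Set E, G.IsPerfectMatching M → ∃! e, e ∈ M ∧ e ∈ G.CutEdges X

def Bipartite : Prop :=
  ∃ f : V → Bool, ∀ e : E, f (G.fst e) ≠ f (G.snd e)

/-- A brick: non-bipartite matching-covered graph with no non-trivial tight cut. -/
def IsBrick : Prop :=
  G.MatchingCovered ∧ ¬ G.Bipartite ∧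
  ∀ X : Set V, 2 ≤ X.ncard → 2 ≤ (Set.univ \ X).ncard → ¬ G.IsTightCut X

end Multigraph


lemma even_card_of_inv {V : Type} [DecidableEq V] (s : Finset V) (σ : V → V)
    (h1 : ∀ v ∈ s, σ v ∈ s) (h2 : ∀ v ∈ s, σ (σ v) = v) (h3 : ∀ v ∈ s, σ v ≠ v) :
    Even s.card := by
  induction s using Finset.strongInduction with
  | _ s ih =>
    rcases s.eq_empty_or_nonempty with rfl | ⟨v, hv⟩
    · simp
    · have hσv := h1 v hv
      set t := s \ {v, σ v} with ht
      have hsub : {v, σ v} ⊆ s := by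
        intro x hx; simp only [Finset.mem_insert, Finset.mem_singleton] at hx
        rcases hx with rfl | rfl
        · exact hv
        · exact hσv
      have htss : t ⊂ s := by
        apply Finset.sdiff_ssubset hsub
        exact ⟨v, by simp⟩
      have hmem : ∀ w ∈ t, w ∈ s ∧ w ≠ v ∧ w ≠ σ v := by
        intro w hw
        simp only [ht, Finset.mem_sdiff, Finset.mem_insert, Finset.mem_singleton] at hw
        tauto
      have h1' : ∀ w ∈ t, σ w ∈ t := by
        intro w hw
        obtain ⟨hws, hwv, hwσv⟩ := hmem w hw
        simp only [ht, Finset.mem_sdiff, Finset.mem_insert, Finset.mem_singleton]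
        refine ⟨h1 w hws, ?_⟩
        rintro (hh | hh)
        · apply hwσv; rw [← hh, h2 w hws]
        · apply hwv
          have := congrArg σ hh
          rwa [h2 w hws, h2 v hv] at this
      have heven : Even t.card := by
        apply ih t htss (fun w hw => h1' w hw)
          (fun w hw => h2 w (hmem w hw).1) (fun w hw => h3 w (hmem w hw).1)
      have hcard2 : ({v, σ v} : Finset V).card = 2 := by
        rw [Finset.card_insert_of_notMem (by simp [Ne.symm (h3 v hv)]), Finset.card_singleton]
      have : s.card = t.card + 2 := by
        have h4 := Finset.card_sdiff_of_subset hsub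
        have hle := Finset.card_le_card hsub
        rw [hcard2] at h4 hle
        rw [← ht] at h4
        omega
      rw [this]
      exact heven.add (by norm_num)

namespace Multigraph

variable {V E : Type} (G : Multigraph V E)

/-- Components are closed under edges of `F`. -/
lemma comp_closed {F : Set E} {X : Set V} (hX : G.IsCompOn F Set.univ X)
    {e : E} {u w : V} (he : e ∈ F) (hu : G.Inc e u) (hw : G.Inc e w) (hux : u ∈ X) :
    w ∈ X := by
  obtain ⟨v₀, -, rfl⟩ := hX
  by_cases h : u = w
  · exact h ▸ hux
  · exact ⟨Set.mem_univ _, Relation.ReflTransGen.head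
      ⟨Set.mem_univ _, Set.mem_univ _, fun hh => h hh.symm, e, he, hw, hu⟩ hux.2⟩

lemma red_bichrom {c : E → V → Bool} (hW : G.IsWState c) (v : V) :
    ∃ e, G.Inc e v ∧ G.Bichromatic c e := by
  obtain ⟨-, -, hvc, hnr⟩ := hW
  obtain ⟨e, hinc, hred⟩ := hvc v
  refine ⟨e, hinc, ?_⟩
  intro hmono
  have h1 := hnr e (fun hb => hb hmono)
  have h2 : c e (G.snd e) = false := by rw [← hmono]; exact h1
  rcases hinc with h | h
  · rw [h] at h1; rw [h1] at hred; exact Bool.false_ne_true hred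
  · rw [h] at h2; rw [h2] at hred; exact Bool.false_ne_true hred

/-- Monochromatic edges do not cross a component. -/
lemma mono_iff {c : E → V → Bool} {X : Set V}
    (hX : G.IsCompOn (G.MonoEdges c) Set.univ X) {e : E} (hm : e ∈ G.MonoEdges c) :
    (G.fst e ∈ X ↔ G.snd e ∈ X) :=
  ⟨fun h => G.comp_closed hX hm (Or.inl rfl) (Or.inr rfl) h,
   fun h => G.comp_closed hX hm (Or.inr rfl) (Or.inl rfl) h⟩

lemma even_of_pm [Fintype V] {M : Set E} (hM : G.IsPerfectMatching M) (A : Set V)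
    (h : ∀ g ∈ M, (G.fst g ∈ A ↔ G.snd g ∈ A)) : Even A.ncard := by
  classical
  choose edge h1 h2 using fun v : V => hM.2 v (Set.mem_univ v)
  set σ : V → V := fun v => if G.fst (edge v) = v then G.snd (edge v) else G.fst (edge v)
    with hσ
  have hsnd : ∀ v, G.fst (edge v) ≠ v → G.snd (edge v) = v := by
    intro v hf
    rcases (h1 v).2 with hh | hh
    · exact absurd hh hf
    · exact hh
  have hincσ : ∀ v, G.Inc (edge v) (σ v) ∧ σ v ≠ v := by
    intro v
    by_cases hf : G.fst (edge v) = v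
    · have : σ v = G.snd (edge v) := by simp [hσ, hf]
      rw [this]
      exact ⟨Or.inr rfl, fun hh => G.no_loop (edge v) (hf.trans hh.symm)⟩
    · have : σ v = G.fst (edge v) := by simp [hσ, hf]
      rw [this]
      exact ⟨Or.inl rfl, hf⟩
  have hedgeσ : ∀ v, edge (σ v) = edge v := fun v =>
    (h2 (σ v) (edge v) ⟨(h1 v).1, (hincσ v).1⟩).symm
  have hinv : ∀ v, σ (σ v) = v := by
    intro v
    have hstep : σ (σ v) =
        if G.fst (edge v) = σ v then G.snd (edge v) else G.fst (edge v) := by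
      show (if G.fst (edge (σ v)) = σ v then G.snd (edge (σ v)) else G.fst (edge (σ v))) = _
      rw [hedgeσ v]
    by_cases hf : G.fst (edge v) = v
    · have hσv : σ v = G.snd (edge v) := by simp [hσ, hf]
      rw [hstep, if_neg (by rw [hσv]; exact G.no_loop (edge v)), hf]
    · have hσv : σ v = G.fst (edge v) := by simp [hσ, hf]
      rw [hstep, if_pos hσv.symm, hsnd v hf]
  have hmaps : ∀ v ∈ A, σ v ∈ A := by
    intro v hv
    have hiff := h (edge v) (h1 v).1
    by_cases hf : G.fst (edge v) = v
    · have : σ v = G.snd (edge v) := by simp [hσ, hf]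
      rw [this]
      exact hiff.mp (by rw [hf]; exact hv)
    · have : σ v = G.fst (edge v) := by simp [hσ, hf]
      rw [this]
      exact hiff.mpr (by rw [hsnd v hf]; exact hv)
  rw [Set.ncard_eq_toFinset_card']
  apply even_card_of_inv _ σ
  · intro v hv
    rw [Set.mem_toFinset] at *
    exact hmaps v hv
  · intro v _
    exact hinv v
  · intro v hv
    exact (hincσ v).2

/-- Glue the `X`-part of one matching with the `X'`-part of another. -/
lemma combine {X X' : Set V} (hd : Disjoint X X') (hu : X ∪ X' = Set.univ)
    {M M' : Set E} (hM : G.IsPerfectMatching M) (hM' : G.IsPerfectMatching M')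
    (hMs : ∀ g ∈ M, (G.fst g ∈ X ∧ G.snd g ∈ X) ∨ (G.fst g ∈ X' ∧ G.snd g ∈ X'))
    (hM's : ∀ g ∈ M', (G.fst g ∈ X ∧ G.snd g ∈ X) ∨ (G.fst g ∈ X' ∧ G.snd g ∈ X')) :
    G.IsPerfectMatching ({g | g ∈ M ∧ G.fst g ∈ X ∧ G.snd g ∈ X} ∪
      {g | g ∈ M' ∧ G.fst g ∈ X' ∧ G.snd g ∈ X'}) := by
  have hside : ∀ v : V, v ∈ X ∨ v ∈ X' := by
    intro v
    have : v ∈ X ∪ X' := hu.symm ▸ Set.mem_univ v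
    exact this
  have hnd := Set.disjoint_left.mp hd
  constructor
  · intro e _
    exact ⟨Set.mem_univ _, Set.mem_univ _⟩
  · intro v _
    rcases hside v with hv | hv
    · obtain ⟨e, ⟨heM, hev⟩, hq⟩ := hM.2 v (Set.mem_univ v)
      have heX : G.fst e ∈ X ∧ G.snd e ∈ X := by
        rcases hMs e heM with h | h
        · exact h
        · exfalso
          rcases hev with hh | hh
          · exact hnd (hh ▸ hv) (hh ▸ h.1)
          · exact hnd (hh ▸ hv) (hh ▸ h.2)
      refine ⟨e, ⟨Or.inl ⟨heM, heX⟩, hev⟩, ?_⟩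
      rintro g ⟨(⟨hgM, -⟩ | ⟨hgM', hgX'⟩), hgv⟩
      · exact hq g ⟨hgM, hgv⟩
      · exfalso
        rcases hgv with hh | hh
        · exact hnd (hh ▸ hv) (hh ▸ hgX'.1)
        · exact hnd (hh ▸ hv) (hh ▸ hgX'.2)
    · obtain ⟨e, ⟨heM, hev⟩, hq⟩ := hM'.2 v (Set.mem_univ v)
      have heX : G.fst e ∈ X' ∧ G.snd e ∈ X' := by
        rcases hM's e heM with h | h
        · exfalso
          rcases hev with hh | hh
          · exact hnd (hh ▸ h.1) (hh ▸ hv)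
          · exact hnd (hh ▸ h.2) (hh ▸ hv)
        · exact h
      refine ⟨e, ⟨Or.inr ⟨heM, heX⟩, hev⟩, ?_⟩
      rintro g ⟨(⟨hgM, hgX⟩ | ⟨hgM', -⟩), hgv⟩
      · exfalso
        rcases hgv with hh | hh
        · exact hnd (hh ▸ hgX.1) (hh ▸ hv)
        · exact hnd (hh ▸ hgX.2) (hh ▸ hv)
      · exact hq g ⟨hgM', hgv⟩


/-- In the situation of the theorem, no perfect matching has a bichromatic
edge with both endpoints in `X`. -/
lemma key [Fintype V] {c : E → V → Bool} {X X' : Set V}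
    (hW : G.IsWState c) (hd : Disjoint X X') (hu : X ∪ X' = Set.univ)
    (hX : G.IsCompOn (G.MonoEdges c) Set.univ X)
    (hX' : G.IsCompOn (G.MonoEdges c) Set.univ X')
    (hne' : X'.Nonempty) {M : Set E} (hM : G.IsPerfectMatching M)
    {e : E} (heM : e ∈ M) (hbi : G.Bichromatic c e) :
    ¬ (G.fst e ∈ X ∧ G.snd e ∈ X) := by
  rintro ⟨he1, he2⟩
  have hnd := Set.disjoint_left.mp hd
  have hside : ∀ v : V, v ∈ X ∨ v ∈ X' := fun v =>
    show v ∈ X ∪ X' from hu.symm ▸ Set.mem_univ v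
  -- e is the unique bichromatic edge of M
  obtain ⟨e₀, he₀, hu₀⟩ := hW.2.1 M hM
  have hee₀ : e = e₀ := hu₀ e ⟨heM, hbi⟩
  have hmonoM : ∀ g ∈ M, g ≠ e → g ∈ G.MonoEdges c := by
    intro g hg hge hb
    exact hge ((hu₀ g ⟨hg, hb⟩).trans hee₀.symm)
  have hsideM : ∀ g ∈ M, (G.fst g ∈ X ∧ G.snd g ∈ X) ∨ (G.fst g ∈ X' ∧ G.snd g ∈ X') := by
    intro g hg
    by_cases hge : g = e
    · exact Or.inl ⟨hge ▸ he1, hge ▸ he2⟩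
    · have hm := hmonoM g hg hge
      rcases hside (G.fst g) with h | h
      · exact Or.inl ⟨h, (G.mono_iff hX hm).mp h⟩
      · exact Or.inr ⟨h, (G.mono_iff hX' hm).mp h⟩
  have hevenX : Even X.ncard := by
    apply G.even_of_pm hM
    intro g hg
    rcases hsideM g hg with ⟨h1, h2⟩ | ⟨h1, h2⟩
    · simp [h1, h2]
    · exact iff_of_false (fun hh => hnd hh h1) (fun hh => hnd hh h2)
  obtain ⟨v, hv⟩ := hne'
  obtain ⟨f, hfv, hfb⟩ := G.red_bichrom hW v
  obtain ⟨Mf, hMf, hfMf⟩ := hW.1 f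
  obtain ⟨f₀, hf₀, huf₀⟩ := hW.2.1 Mf hMf
  have hff₀ : f = f₀ := huf₀ f ⟨hfMf, hfb⟩
  have hmonoMf : ∀ g ∈ Mf, g ≠ f → g ∈ G.MonoEdges c := by
    intro g hg hgf hb
    exact hgf ((huf₀ g ⟨hg, hb⟩).trans hff₀.symm)
  have hcase : (G.fst f ∈ X' ∧ G.snd f ∈ X') ∨
      (∃ u, u ∈ X ∧ G.Inc f u ∧ ∀ w, G.Inc f w → w ∈ X → w = u) := by
    rcases hfv with h | h
    · rcases hside (G.snd f) with h2 | h2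
      · refine Or.inr ⟨G.snd f, h2, Or.inr rfl, ?_⟩
        rintro w (hw | hw) hwX
        · exfalso; exact hnd hwX (hw ▸ h ▸ hv)
        · exact hw.symm ▸ rfl
      · exact Or.inl ⟨h.symm ▸ hv, h2⟩
    · rcases hside (G.fst f) with h2 | h2
      · refine Or.inr ⟨G.fst f, h2, Or.inl rfl, ?_⟩
        rintro w (hw | hw) hwX
        · exact hw.symm ▸ rfl
        · exfalso; exact hnd hwX (hw ▸ h ▸ hv)
      · exact Or.inl ⟨h2, h.symm ▸ hv⟩
  rcases hcase with ⟨hf1, hf2⟩ | ⟨u, huX, hincu, hunot⟩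
  · -- f lies inside X'; combine to get a matching with no bichromatic edge
    have hsideMf : ∀ g ∈ Mf,
        (G.fst g ∈ X ∧ G.snd g ∈ X) ∨ (G.fst g ∈ X' ∧ G.snd g ∈ X') := by
      intro g hg
      by_cases hgf : g = f
      · exact Or.inr ⟨hgf ▸ hf1, hgf ▸ hf2⟩
      · have hm := hmonoMf g hg hgf
        rcases hside (G.fst g) with h | h
        · exact Or.inl ⟨h, (G.mono_iff hX hm).mp h⟩
        · exact Or.inr ⟨h, (G.mono_iff hX' hm).mp h⟩
    have hN := G.combine hd hu hMf hM hsideMf hsideM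
    obtain ⟨g₀, ⟨hg₀N, hg₀b⟩, -⟩ := hW.2.1 _ hN
    rcases hg₀N with ⟨hg₀Mf, hg₀X⟩ | ⟨hg₀M, hg₀X'⟩
    · have : g₀ = f := (huf₀ g₀ ⟨hg₀Mf, hg₀b⟩).trans hff₀.symm
      exact hnd (this ▸ hg₀X.1) hf1
    · have : g₀ = e := (hu₀ g₀ ⟨hg₀M, hg₀b⟩).trans hee₀.symm
      exact hnd he1 (this ▸ hg₀X'.1)
  · -- f crosses the cut: X has odd cardinality, contradiction
    have hfu : ∀ g ∈ Mf, G.Inc g u → g = f := by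
      intro g hg hgu
      obtain ⟨e', -, hq⟩ := hMf.2 u (Set.mem_univ u)
      rw [hq g ⟨hg, hgu⟩, ← hq f ⟨hfMf, hincu⟩]
    have hevenX' : Even ((X \ {u}).ncard) := by
      apply G.even_of_pm hMf
      intro g hg
      by_cases hgf : g = f
      · subst hgf
        refine iff_of_false ?_ ?_
        · rintro ⟨hh1, hh2⟩
          exact hh2 (hunot _ (Or.inl rfl) hh1)
        · rintro ⟨hh1, hh2⟩
          exact hh2 (hunot _ (Or.inr rfl) hh1)
      · have hm := hmonoMf g hg hgf
        have hne1 : G.fst g ≠ u := fun hh =>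
          hgf (hfu g hg (Or.inl hh))
        have hne2 : G.snd g ≠ u := fun hh =>
          hgf (hfu g hg (Or.inr hh))
        have := G.mono_iff hX hm
        simp [Set.mem_diff, hne1, hne2, this]
    have hXcard : (X \ {u}).ncard + 1 = X.ncard :=
      Set.ncard_diff_singleton_add_one huX X.toFinite
    obtain ⟨a, ha⟩ := hevenX
    obtain ⟨b, hb⟩ := hevenX'
    omega

end Multigraph

/-- If both monochromatic components of a W-state graph have at
least 3 vertices, then `δ(X,X')` is a non-trivial tight cut; in particular the
graph is not a brick. -/
theorem stmt11 {V E : Type} [Fintype V] [Fintype E] (G : Multigraph V E)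
    (c : E → V → Bool) (h : G.IsWState c) (X X' : Set V)
    (hd : Disjoint X X') (hu : X ∪ X' = Set.univ)
    (hX : G.IsCompOn (G.MonoEdges c) Set.univ X)
    (hX' : G.IsCompOn (G.MonoEdges c) Set.univ X')
    (hcX : 3 ≤ X.ncard) (hcX' : 3 ≤ X'.ncard) :
    G.IsTightCut X ∧ 2 ≤ X.ncard ∧ 2 ≤ (Set.univ \ X).ncard ∧ ¬ G.IsBrick := by
  have hnd := Set.disjoint_left.mp hd
  have hside : ∀ v : V, v ∈ X ∨ v ∈ X' := fun v =>
    show v ∈ X ∪ X' from hu.symm ▸ Set.mem_univ v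
  have hcompl : Set.univ \ X = X' := by
    ext v
    constructor
    · rintro ⟨-, hvX⟩
      exact (hside v).resolve_left hvX
    · intro hv
      exact ⟨Set.mem_univ v, fun hvX => hnd hvX hv⟩
  have hneX : X.Nonempty := Set.nonempty_of_ncard_ne_zero (by omega)
  have hneX' : X'.Nonempty := Set.nonempty_of_ncard_ne_zero (by omega)
  have hu' : X' ∪ X = Set.univ := by rw [Set.union_comm]; exact hu
  have htight : G.IsTightCut X := by
    intro M hM
    obtain ⟨e₀, ⟨he₀M, he₀b⟩, hu₀⟩ := h.2.1 M hM
    have hcut : e₀ ∈ G.CutEdges X := by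
      have h1 := G.key h hd hu hX hX' hneX' hM he₀M he₀b
      have h2 := G.key h hd.symm hu' hX' hX hneX hM he₀M he₀b
      rcases hside (G.fst e₀) with hf | hf
      · left
        refine ⟨hf, fun hs => h1 ⟨hf, hs⟩⟩
      · right
        have hs : G.snd e₀ ∈ X := by
          rcases hside (G.snd e₀) with hh | hh
          · exact hh
          · exact absurd ⟨hf, hh⟩ h2
        exact ⟨fun hh => hnd hh hf, hs⟩
    refine ⟨e₀, ⟨he₀M, hcut⟩, ?_⟩
    rintro g ⟨hgM, hgcut⟩
    apply hu₀
    refine ⟨hgM, ?_⟩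
    by_contra hgb
    have hm : g ∈ G.MonoEdges c := hgb
    have := G.mono_iff hX hm
    rcases hgcut with ⟨hh1, hh2⟩ | ⟨hh1, hh2⟩
    · exact hh2 (this.mp hh1)
    · exact hh1 (this.mpr hh2)
  refine ⟨htight, by omega, ?_, ?_⟩
  · rw [hcompl]; omega
  · rintro ⟨-, -, hb⟩
    exact hb X (by omega) (by rw [hcompl]; omega) htight
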